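/- For every real $Q \in (0,1)$, the identity $\sum_{\ell \geq 1} 2^{-\ell} (1-Q)^{\ell - 1}\, {}_2F_1\!\left(\frac{\ell}{2}, \frac{\ell+1}{2}; 2; Q\right) = 1$ holds. -/

import Mathlib

open Real

noncomputable def poch (a : ℝ) (n : ℕ) : ℝ := (ascPochhammer ℝ n).eval a

/-- The Gauss hypergeometric series `₂F₁(a,b;c;x)`. -/
noncomputable def hyp2F1 (a b c x : ℝ) : ℝ :=
  ∑' n : ℕ, poch a n * poch b n / (poch c n * (n.factorial : ℝ)) * x ^ n

lemma poch_zero' (a : ℝ) : poch a 0 = 1 := by simp [poch]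

lemma poch_succ' (a : ℝ) (n : ℕ) : poch a (n + 1) = poch a n * (a + n) := by
  simpa [poch] using ascPochhammer_succ_eval n a

/-- `(2)_n = (n+1)!`. -/
lemma poch_two' (n : ℕ) : poch 2 n = ((n + 1).factorial : ℝ) := by
  induction n with
  | zero => simp [poch]
  | succ n ih =>
      rw [poch_succ', ih, Nat.factorial_succ (n + 1)]
      push_cast
      ring

/-- Duplication: `(a/2)_n ((a+1)/2)_n 4^n = (a)_{2n}`. -/
lemma poch_dup (a : ℝ) (n : ℕ) :
    poch (a / 2) n * poch ((a + 1) / 2) n * 4 ^ n = poch a (2 * n) := by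
  induction n with
  | zero => simp [poch]
  | succ n ih =>
      have h2 : 2 * (n + 1) = (2 * n + 1) + 1 := by ring
      rw [h2, poch_succ', poch_succ', poch_succ', poch_succ', ← ih]
      push_cast
      ring

/-- `(m+1)_n = n! * C(m+n, n)` as reals. -/
lemma poch_nat (m n : ℕ) :
    poch ((m : ℝ) + 1) n = (n.factorial : ℝ) * ((m + n).choose n : ℝ) := by
  have h : ((m : ℝ) + 1) = (((m + 1 : ℕ) : ℕ) : ℝ) := by push_cast; ring
  rw [poch, h, ← ascPochhammer_eval_cast, ascPochhammer_nat_eq_ascFactorial,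
    Nat.ascFactorial_eq_factorial_mul_choose]
  push_cast
  ring

lemma catalan_fact (n : ℕ) :
    (2 * n).factorial = catalan n * ((n + 1).factorial * n.factorial) := by
  have h2 : (2 * n).choose n * n.factorial * (2 * n - n).factorial = (2 * n).factorial :=
    Nat.choose_mul_factorial_mul_factorial (by omega)
  have h3 : 2 * n - n = n := by omega
  rw [h3] at h2
  rw [← h2, ← Nat.centralBinom, ← succ_mul_catalan_eq_centralBinom, Nat.factorial_succ]
  ring

lemma centralBinom_le_four_pow (n : ℕ) : Nat.centralBinom n ≤ 4 ^ n := by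
  have h := Nat.sum_range_choose (2 * n)
  calc Nat.centralBinom n = (2 * n).choose n := rfl
    _ ≤ ∑ i ∈ Finset.range (2 * n + 1), (2 * n).choose i :=
        Finset.single_le_sum (fun i _ => Nat.zero_le _) (by simp [Finset.mem_range]; omega)
    _ = 2 ^ (2 * n) := h
    _ = 4 ^ n := by rw [pow_mul]; norm_num

lemma triangle_le_sq (u : ℕ → ℝ) (hu : ∀ i, 0 ≤ u i) (N : ℕ) :
    ∑ n ∈ Finset.range N, ∑ p ∈ Finset.HasAntidiagonal.antidiagonal n, u p.1 * u p.2
      ≤ (∑ i ∈ Finset.range N, u i) ^ 2 := by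
  classical
  have hdisj : (↑(Finset.range N) : Set ℕ).PairwiseDisjoint Finset.HasAntidiagonal.antidiagonal := by
    intro a _ b _ hab
    simp only [Finset.disjoint_left]
    intro p hpa hpb
    rw [Finset.HasAntidiagonal.mem_antidiagonal] at hpa hpb
    exact hab (hpa ▸ hpb.symm ▸ rfl)
  rw [← Finset.sum_biUnion hdisj]
  have hsub : (Finset.range N).biUnion Finset.HasAntidiagonal.antidiagonal ⊆
      Finset.range N ×ˢ Finset.range N := by
    intro p hp
    rw [Finset.mem_biUnion] at hp
    obtain ⟨n, hn, hpn⟩ := hp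
    rw [Finset.mem_range] at hn
    rw [Finset.HasAntidiagonal.mem_antidiagonal] at hpn
    rw [Finset.mem_product, Finset.mem_range, Finset.mem_range]
    omega
  calc ∑ p ∈ (Finset.range N).biUnion Finset.HasAntidiagonal.antidiagonal, u p.1 * u p.2
      ≤ ∑ p ∈ Finset.range N ×ˢ Finset.range N, u p.1 * u p.2 :=
        Finset.sum_le_sum_of_subset_of_nonneg hsub
          (fun p _ _ => mul_nonneg (hu p.1) (hu p.2))
    _ = (∑ i ∈ Finset.range N, u i) ^ 2 := by
        rw [sq, Finset.sum_mul_sum, ← Finset.sum_product']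

/-- The Catalan generating function at `t = Q/(1+Q)²` sums to `1 + Q`. -/
lemma catalan_hasSum (Q : ℝ) (hQ0 : 0 < Q) (hQ1 : Q < 1) :
    HasSum (fun n : ℕ => (catalan n : ℝ) * (Q / (1 + Q) ^ 2) ^ n) (1 + Q) := by
  have hQ1' : (0 : ℝ) < 1 + Q := by linarith
  set t : ℝ := Q / (1 + Q) ^ 2 with ht
  set a : ℕ → ℝ := fun n => (catalan n : ℝ) * t ^ n with ha
  have ht0 : 0 < t := by positivity
  have ht4 : 4 * t < 1 := by
    rw [ht, ← mul_div_assoc, div_lt_one (by positivity)]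
    nlinarith [sq_nonneg (1 - Q)]
  have hanonneg : ∀ n, 0 ≤ a n := fun n => by positivity
  have hb : ∀ n, a n ≤ (4 * t) ^ n := by
    intro n
    have h1 : (catalan n : ℝ) ≤ 4 ^ n := by
      have h2 : catalan n ≤ Nat.centralBinom n := by
        calc catalan n ≤ (n + 1) * catalan n := Nat.le_mul_of_pos_left _ n.succ_pos
          _ = Nat.centralBinom n := succ_mul_catalan_eq_centralBinom n
      exact_mod_cast h2.trans (centralBinom_le_four_pow n)
    calc a n = (catalan n : ℝ) * t ^ n := rfl
      _ ≤ (4 : ℝ) ^ n * t ^ n := by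
          apply mul_le_mul_of_nonneg_right h1 (by positivity)
      _ = (4 * t) ^ n := by rw [mul_pow]
  have hs : Summable a :=
    Summable.of_nonneg_of_le hanonneg hb
      (summable_geometric_of_lt_one (by positivity) ht4)
  have hnorm : Summable fun n => ‖a n‖ := by
    simpa [Real.norm_eq_abs, abs_of_nonneg (hanonneg _)] using hs
  have hinner : ∀ n, ∑ kl ∈ Finset.HasAntidiagonal.antidiagonal n, a kl.1 * a kl.2
      = (catalan (n + 1) : ℝ) * t ^ n := by
    intro n
    rw [catalan_succ']
    push_cast
    rw [Finset.sum_mul]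
    apply Finset.sum_congr rfl
    intro kl hkl
    have hkl' : kl.1 + kl.2 = n := Finset.HasAntidiagonal.mem_antidiagonal.mp hkl
    simp only [ha]
    rw [← hkl', pow_add]
    ring
  set f : ℝ := ∑' n, a n with hf
  have hquad : f = 1 + t * (f * f) := by
    have hmul : f * f = ∑' n, ∑ kl ∈ Finset.HasAntidiagonal.antidiagonal n, a kl.1 * a kl.2 :=
      tsum_mul_tsum_eq_tsum_sum_antidiagonal_of_summable_norm hnorm hnorm
    have hmul2 : f * f = ∑' n, (catalan (n + 1) : ℝ) * t ^ n := by
      rw [hmul]; exact tsum_congr hinner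
    have hstep : ∀ n : ℕ, a (n + 1) = t * ((catalan (n + 1) : ℝ) * t ^ n) := by
      intro n
      simp only [ha, pow_succ]
      ring
    have h5 : t * (f * f) = ∑' n, a (n + 1) := by
      rw [hmul2, ← tsum_mul_left]
      exact tsum_congr fun n => (hstep n).symm
    rw [h5, hf, Summable.tsum_eq_zero_add hs]
    simp [ha]
  have hpart : ∀ N, ∑ n ∈ Finset.range N, a n ≤ 1 + Q := by
    intro N
    induction N with
    | zero => simp; linarith
    | succ N ih =>
        rw [Finset.sum_range_succ']
        have ha0 : a 0 = 1 := by simp [ha]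
        have hstep : ∀ n : ℕ, a (n + 1)
            = t * ∑ kl ∈ Finset.HasAntidiagonal.antidiagonal n, a kl.1 * a kl.2 := by
          intro n
          rw [hinner n]
          simp only [ha, pow_succ]
          ring
        have hsum0 : 0 ≤ ∑ i ∈ Finset.range N, a i :=
          Finset.sum_nonneg fun i _ => hanonneg i
        calc (∑ i ∈ Finset.range N, a (i + 1)) + a 0
            = 1 + t * ∑ n ∈ Finset.range N,
                ∑ kl ∈ Finset.HasAntidiagonal.antidiagonal n, a kl.1 * a kl.2 := by
              rw [ha0]
              rw [Finset.sum_congr rfl fun n _ => hstep n, ← Finset.mul_sum]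
              ring
          _ ≤ 1 + t * (∑ i ∈ Finset.range N, a i) ^ 2 := by
              have := triangle_le_sq a hanonneg N
              nlinarith
          _ ≤ 1 + t * (1 + Q) ^ 2 := by
              have hpw := mul_le_mul_of_nonneg_left (pow_le_pow_left₀ hsum0 ih 2) ht0.le
              linarith
          _ = 1 + Q := by
              rw [ht]
              field_simp
  have hle : f ≤ 1 + Q := Real.tsum_le_of_sum_range_le hanonneg hpart
  have hfeq : f = 1 + Q := by
    have hkey : (f - (1 + Q)) * (Q * f - (1 + Q)) = 0 := by
      have h2 : (1 + Q) ^ 2 * f = (1 + Q) ^ 2 + Q * (f * f) := by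
        have h3 := hquad
        rw [ht] at h3
        field_simp at h3
        linarith [h3]
      nlinarith [h2]
    rcases mul_eq_zero.mp hkey with h | h
    · linarith
    · nlinarith
  have := hs.hasSum
  rw [← hf, hfeq] at this
  exact this

/-- Corollary 1: for `Q ∈ (0,1)`,
`∑_{ℓ≥1} 2^{-ℓ} (1-Q)^{ℓ-1} ₂F₁(ℓ/2,(ℓ+1)/2;2;Q) = 1`. -/
theorem total_progeny_sum (Q : ℝ) (hQ0 : 0 < Q) (hQ1 : Q < 1) :
    (∑' ℓ : ℕ, (1 / 2 : ℝ) ^ (ℓ + 1) * (1 - Q) ^ ℓ *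
        hyp2F1 (((ℓ : ℝ) + 1) / 2) (((ℓ : ℝ) + 2) / 2) 2 Q) = 1 := by
  have hQ1' : (0 : ℝ) < 1 + Q := by linarith
  have hQm : (0 : ℝ) < 1 - Q := by linarith
  set r : ℝ := (1 - Q) / 2 with hr
  have hr0 : 0 ≤ r := by positivity
  have hrn : ‖r‖ < 1 := by
    rw [Real.norm_eq_abs, abs_of_nonneg hr0, hr]
    linarith
  set g : ℕ → ℕ → ℝ := fun n ℓ =>
    (catalan n : ℝ) * (Q / 4) ^ n / 2 * (((ℓ + 2 * n).choose (2 * n) : ℝ) * r ^ ℓ) with hg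
  have key : ∀ ℓ n : ℕ, (1 / 2 : ℝ) ^ (ℓ + 1) * (1 - Q) ^ ℓ *
      (poch (((ℓ : ℝ) + 1) / 2) n * poch (((ℓ : ℝ) + 2) / 2) n /
        (poch 2 n * (n.factorial : ℝ)) * Q ^ n) = g n ℓ := by
    intro ℓ n
    have h2 : ((ℓ : ℝ) + 2) / 2 = (((ℓ : ℝ) + 1) + 1) / 2 := by ring
    rw [h2, poch_two']
    have h4 : (0 : ℝ) < 4 ^ n := by positivity
    have hP : poch (((ℓ : ℝ) + 1) / 2) n * poch ((((ℓ : ℝ) + 1) + 1) / 2) n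
        = (catalan n : ℝ) * (((n + 1).factorial : ℝ) * (n.factorial : ℝ)) *
          ((ℓ + 2 * n).choose (2 * n) : ℝ) / 4 ^ n := by
      rw [eq_div_iff (ne_of_gt h4), poch_dup ((ℓ : ℝ) + 1) n, poch_nat ℓ (2 * n)]
      have hcf : ((2 * n).factorial : ℝ)
          = (catalan n : ℝ) * (((n + 1).factorial : ℝ) * (n.factorial : ℝ)) := by
        exact_mod_cast congrArg (Nat.cast : ℕ → ℝ) (catalan_fact n)
      rw [hcf]
    rw [hP, hg, hr]
    have hf1 : ((n + 1).factorial : ℝ) ≠ 0 := Nat.cast_ne_zero.mpr (Nat.factorial_ne_zero _)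
    have hf2 : (n.factorial : ℝ) ≠ 0 := Nat.cast_ne_zero.mpr (Nat.factorial_ne_zero _)
    field_simp
    rw [div_pow Q, div_pow (1 - Q), pow_succ, one_div_pow]
    field_simp
  have hℓ : ∀ n : ℕ, HasSum (fun ℓ => g n ℓ)
      ((catalan n : ℝ) * (Q / (1 + Q) ^ 2) ^ n / (1 + Q)) := by
    intro n
    have h := (hasSum_choose_mul_geometric_of_norm_lt_one (2 * n) hrn).mul_left
      ((catalan n : ℝ) * (Q / 4) ^ n / 2)
    have h1Q : (1 + Q) ≠ 0 := by positivity
    have hval : (catalan n : ℝ) * (Q / 4) ^ n / 2 * (1 / (1 - r) ^ (2 * n + 1))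
        = (catalan n : ℝ) * (Q / (1 + Q) ^ 2) ^ n / (1 + Q) := by
      have h1r : 1 - r = (1 + Q) / 2 := by rw [hr]; ring
      rw [h1r]
      have h4 : (4 : ℝ) ^ n = 2 ^ n * 2 ^ n := by rw [← mul_pow]; norm_num
      rw [div_pow, div_pow, div_pow, ← pow_mul]
      field_simp
      rw [h4]
      ring
    rw [hval] at h
    convert h using 1
  have hv : Summable (fun n : ℕ => (catalan n : ℝ) * (Q / (1 + Q) ^ 2) ^ n / (1 + Q)) :=
    ((catalan_hasSum Q hQ0 hQ1).div_const (1 + Q)).summable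
  have hgnn : ∀ p : ℕ × ℕ, 0 ≤ g p.1 p.2 := by
    intro p
    have : (0 : ℝ) ≤ Q / 4 := by positivity
    exact mul_nonneg (by positivity) (by positivity)
  have hF : Summable (fun p : ℕ × ℕ => g p.1 p.2) := by
    rw [summable_prod_of_nonneg hgnn]
    refine ⟨fun n => (hℓ n).summable, ?_⟩
    apply Summable.congr hv
    intro n
    exact ((hℓ n).tsum_eq).symm
  calc (∑' ℓ : ℕ, (1 / 2 : ℝ) ^ (ℓ + 1) * (1 - Q) ^ ℓ *
        hyp2F1 (((ℓ : ℝ) + 1) / 2) (((ℓ : ℝ) + 2) / 2) 2 Q)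
      = ∑' ℓ : ℕ, ∑' n : ℕ, g n ℓ := by
        apply tsum_congr
        intro ℓ
        rw [hyp2F1, ← tsum_mul_left]
        exact tsum_congr fun n => key ℓ n
    _ = ∑' n : ℕ, ∑' ℓ : ℕ, g n ℓ := Summable.tsum_comm hF
    _ = ∑' n : ℕ, (catalan n : ℝ) * (Q / (1 + Q) ^ 2) ^ n / (1 + Q) :=
        tsum_congr fun n => (hℓ n).tsum_eq
    _ = 1 := by
        rw [((catalan_hasSum Q hQ0 hQ1).div_const (1 + Q)).tsum_eq]
        field_simp
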